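/- Suppose Y = q(D, U_D) with q(d, ·) continuous and strictly increasing, U_D = D·U1 + (1−D)·U0, and D = h(Z, η), and suppose rank similarity holds: the conditional distribution of U0 given (η, Z) equals the conditional distribution of U1 given (η, Z). Then Condition S* holds. -/

import Mathlib

open MeasureTheory ProbabilityTheory Filter Set

/-- Probability of an event. -/
noncomputable def pr {Ω : Type*} [MeasurableSpace Ω] (μ : Measure Ω) (s : Set Ω) : ℝ :=
  (μ s).toReal


lemma aux_trichotomy {q : ℝ → ℝ} (hc : Continuous q) (hm : StrictMono q) (y : ℝ) :
    (∀ u, ¬ q u ≤ y) ∨ (∀ u, q u ≤ y) ∨ ∃ a, ∀ u, q u ≤ y ↔ u ≤ a := by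
  by_cases h1 : ({u | q u ≤ y} : Set ℝ).Nonempty
  · by_cases h2 : BddAbove {u : ℝ | q u ≤ y}
    · right; right
      have hcl : IsClosed {u : ℝ | q u ≤ y} := isClosed_Iic.preimage hc
      have hmem := hcl.csSup_mem h1 h2
      exact ⟨sSup {u : ℝ | q u ≤ y}, fun u =>
        ⟨fun hu => le_csSup h2 hu, fun hu => le_trans (hm.monotone hu) hmem⟩⟩
    · right; left
      intro u
      obtain ⟨v, hv, huv⟩ := not_bddAbove_iff.mp h2 u
      exact le_trans (hm.monotone huv.le) hv
  · left; exact fun u hu => h1 ⟨u, hu⟩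

lemma aux_ae_bounds {T : Type*} [MeasurableSpace T] {ν : Measure T} [IsFiniteMeasure ν]
    {f : T → ℝ} (hf : Measurable f)
    (hb : ∀ s : Set T, MeasurableSet s →
      0 ≤ ∫ t in s, f t ∂ν ∧ ∫ t in s, f t ∂ν ≤ (ν s).toReal) :
    ∀ᵐ t ∂ν, 0 ≤ f t ∧ f t ≤ 1 := by
  have hnull1 : ∀ k : ℕ, ν (f ⁻¹' Icc (-(k:ℝ)-1) (-(1/(k+1)))) = 0 := by
    intro k
    set s := f ⁻¹' Icc (-(k:ℝ)-1) (-(1/((k:ℝ)+1))) with hsdef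
    have hms : MeasurableSet s := hf measurableSet_Icc
    have hk1 : (0:ℝ) < (k:ℝ)+1 := by positivity
    have hd : (0:ℝ) < 1/((k:ℝ)+1) := by positivity
    have hint : IntegrableOn f s ν := by
      refine ⟨hf.aestronglyMeasurable.restrict, ?_⟩
      refine HasFiniteIntegral.of_bounded (C := (k:ℝ)+1) ?_
      filter_upwards [ae_restrict_mem hms] with t ht
      rw [Real.norm_eq_abs, abs_le]
      exact ⟨by linarith [ht.1], by linarith [ht.2]⟩
    have hle : ∫ t in s, f t ∂ν ≤ (ν s).toReal * (-(1/((k:ℝ)+1))) := by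
      have := setIntegral_mono_on hint
        (integrableOn_const (measure_ne_top ν s)) hms
        (fun t ht => ht.2)
      simpa [smul_eq_mul, measureReal_def] using this
    have h0 := (hb s hms).1
    have hν0 : (ν s).toReal = 0 := by nlinarith [ENNReal.toReal_nonneg (a := ν s)]
    exact ((ENNReal.toReal_eq_zero_iff _).mp hν0).resolve_right (measure_ne_top ν s)
  have hnull2 : ∀ k : ℕ, ν (f ⁻¹' Icc (1+1/((k:ℝ)+1)) ((k:ℝ)+2)) = 0 := by
    intro k
    set s := f ⁻¹' Icc (1+1/((k:ℝ)+1)) ((k:ℝ)+2) with hsdef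
    have hms : MeasurableSet s := hf measurableSet_Icc
    have hk1 : (0:ℝ) < (k:ℝ)+1 := by positivity
    have hd : (0:ℝ) < 1/((k:ℝ)+1) := by positivity
    have hge : (ν s).toReal * (1+1/((k:ℝ)+1)) ≤ ∫ t in s, f t ∂ν := by
      have hint : IntegrableOn f s ν := by
        refine ⟨hf.aestronglyMeasurable.restrict, ?_⟩
        refine HasFiniteIntegral.of_bounded (C := (k:ℝ)+2) ?_
        filter_upwards [ae_restrict_mem hms] with t ht
        rw [Real.norm_eq_abs, abs_le]
        exact ⟨by linarith [ht.1], ht.2⟩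
      have := setIntegral_mono_on
        (integrableOn_const (measure_ne_top ν s)) hint hms
        (fun t ht => ht.1)
      simpa [smul_eq_mul, measureReal_def] using this
    have h1 := (hb s hms).2
    have hν0 : (ν s).toReal = 0 := by nlinarith [ENNReal.toReal_nonneg (a := ν s)]
    exact ((ENNReal.toReal_eq_zero_iff _).mp hν0).resolve_right (measure_ne_top ν s)
  rw [ae_iff]
  refine measure_mono_null (fun t ht => ?_)
    (measure_union_null (measure_iUnion_null hnull1) (measure_iUnion_null hnull2))
  simp only [mem_setOf_eq, not_and_or, not_le] at ht
  rcases ht with ht | ht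
  · left
    obtain ⟨k, hk⟩ := exists_nat_ge (max (-f t) (1/(-f t)))
    have hft : (0:ℝ) < -f t := by linarith
    have hk1 : 1/(-f t) ≤ (k:ℝ) := le_trans (le_max_right _ _) hk
    have hk2 : -f t ≤ (k:ℝ) := le_trans (le_max_left _ _) hk
    refine mem_iUnion.mpr ⟨k, ?_⟩
    refine ⟨by linarith, ?_⟩
    have : 1/((k:ℝ)+1) ≤ -f t := by
      rw [one_div_le (by positivity) hft]
      linarith
    linarith
  · right
    obtain ⟨k, hk⟩ := exists_nat_ge (max (f t) (1/(f t - 1)))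
    have hft : (0:ℝ) < f t - 1 := by linarith
    have hk1 : 1/(f t - 1) ≤ (k:ℝ) := le_trans (le_max_right _ _) hk
    have hk2 : f t ≤ (k:ℝ) := le_trans (le_max_left _ _) hk
    refine mem_iUnion.mpr ⟨k, ?_, by linarith⟩
    have : 1/((k:ℝ)+1) ≤ f t - 1 := by
      rw [one_div_le (by positivity) hft]
      linarith
    linarith

lemma aux_ae_eq {T : Type*} [MeasurableSpace T] {ν : Measure T} [IsFiniteMeasure ν]
    {f g : T → ℝ} (hf : Measurable f) (hg : Measurable g)
    (hbf : ∀ s : Set T, MeasurableSet s →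
      0 ≤ ∫ t in s, f t ∂ν ∧ ∫ t in s, f t ∂ν ≤ (ν s).toReal)
    (hbg : ∀ s : Set T, MeasurableSet s →
      0 ≤ ∫ t in s, g t ∂ν ∧ ∫ t in s, g t ∂ν ≤ (ν s).toReal)
    (heq : ∀ s : Set T, MeasurableSet s → ∫ t in s, f t ∂ν = ∫ t in s, g t ∂ν) :
    f =ᵐ[ν] g := by
  have hif : Integrable f ν := by
    refine ⟨hf.aestronglyMeasurable, HasFiniteIntegral.of_bounded (C := 1) ?_⟩
    filter_upwards [aux_ae_bounds hf hbf] with t ht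
    rw [Real.norm_eq_abs, abs_le]; exact ⟨by linarith [ht.1], ht.2⟩
  have hig : Integrable g ν := by
    refine ⟨hg.aestronglyMeasurable, HasFiniteIntegral.of_bounded (C := 1) ?_⟩
    filter_upwards [aux_ae_bounds hg hbg] with t ht
    rw [Real.norm_eq_abs, abs_le]; exact ⟨by linarith [ht.1], ht.2⟩
  exact ae_eq_of_forall_setIntegral_eq_of_sigmaFinite
    (fun s hs _ => hif.integrableOn) (fun s hs _ => hig.integrableOn)
    (fun s hs _ => heq s hs)

/-- Theorem 4: rank similarity (the conditional distribution of U₀ given (η, Z) equals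
that of U₁ given (η, Z)) implies Condition S*.  Rank similarity is encoded by equality
of the joint probabilities `P[U₀ ≤ u, η ∈ s, Z = z] = P[U₁ ≤ u, η ∈ s, Z = z]`, and
`F_d y t = P[Y_d ≤ y | η = t]` is a conditional CDF of `Y_d = q(d, U_d)` given `η`
with respect to the type distribution `ν = law(η)`. -/
theorem rank_similarity_implies_condSstar
    {Ω : Type*} [MeasurableSpace Ω] (μ : Measure Ω) [IsProbabilityMeasure μ]
    {T : Type*} [MeasurableSpace T]
    (L : ℕ) [NeZero L]
    (U0 U1 : Ω → ℝ) (η : Ω → T) (Z : Ω → Fin L)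
    (q : ℕ → ℝ → ℝ) (h : Fin L → T → ℕ) (D : Ω → ℕ) (Y0 Y1 Y : Ω → ℝ)
    (hmU0 : Measurable U0) (hmU1 : Measurable U1) (hmη : Measurable η) (hmZ : Measurable Z)
    -- outcome equation with q(d,·) continuous and strictly increasing, selection D = h(Z, η)
    (hq : ∀ d, Continuous (q d) ∧ StrictMono (q d))
    (hD : ∀ ω, D ω = h (Z ω) (η ω))
    (hY0 : ∀ ω, Y0 ω = q 0 (U0 ω)) (hY1 : ∀ ω, Y1 ω = q 1 (U1 ω))
    (hYobs : ∀ ω, Y ω = if D ω = 1 then Y1 ω else Y0 ω)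
    -- rank similarity: U₀ | (η, Z)  =ᵈ  U₁ | (η, Z)
    (hranksim : ∀ (u : ℝ) (s : Set T), MeasurableSet s → ∀ ℓ : Fin L,
      pr μ {ω | U0 ω ≤ u ∧ η ω ∈ s ∧ Z ω = ℓ}
        = pr μ {ω | U1 ω ≤ u ∧ η ω ∈ s ∧ Z ω = ℓ})
    -- the type distribution and the conditional CDFs of Y₀, Y₁ given η
    (ν : Measure T) (hν : ν = μ.map η)
    (F0 F1 : ℝ → T → ℝ)
    (hF0meas : ∀ y, Measurable (F0 y)) (hF1meas : ∀ y, Measurable (F1 y))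
    (hF0 : ∀ (y : ℝ) (s : Set T), MeasurableSet s →
      pr μ {ω | Y0 ω ≤ y ∧ η ω ∈ s} = ∫ t in s, F0 y t ∂ν)
    (hF1 : ∀ (y : ℝ) (s : Set T), MeasurableSet s →
      pr μ {ω | Y1 ω ≤ y ∧ η ω ∈ s} = ∫ t in s, F1 y t ∂ν) :
    -- Condition S*
    ∀ w wt : T → ℝ, Measurable w → Measurable wt →
      (∀ t, 0 ≤ w t) → (∀ t, 0 ≤ wt t) →
      (∫ t, w t ∂ν) = 1 → (∫ t, wt t ∂ν) = 1 →
      ((∀ y : ℝ, (∫ t, w t * F1 y t ∂ν) ≤ ∫ t, wt t * F1 y t ∂ν) ↔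
        (∀ y : ℝ, (∫ t, w t * F0 y t ∂ν) ≤ ∫ t, wt t * F0 y t ∂ν)) := by
  intro w wt hmw hmwt hw0 hwt0 hw1 hwt1
  haveI hνP : IsProbabilityMeasure ν := by
    rw [hν]; exact Measure.isProbabilityMeasure_map hmη.aemeasurable
  have hνs : ∀ s : Set T, MeasurableSet s → (ν s).toReal = pr μ (η ⁻¹' s) := by
    intro s hs; rw [hν, Measure.map_apply hmη hs]; rfl
  -- set-integral bounds for conditional CDFs
  have hbnd : ∀ (F : ℝ → T → ℝ) (W : Ω → ℝ),
      (∀ (y : ℝ) (s : Set T), MeasurableSet s →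
        pr μ {ω | W ω ≤ y ∧ η ω ∈ s} = ∫ t in s, F y t ∂ν) →
      ∀ (y : ℝ) (s : Set T), MeasurableSet s →
        0 ≤ ∫ t in s, F y t ∂ν ∧ ∫ t in s, F y t ∂ν ≤ (ν s).toReal := by
    intro F W hFW y s hs
    rw [← hFW y s hs]
    refine ⟨ENNReal.toReal_nonneg, ?_⟩
    rw [hνs s hs]
    exact ENNReal.toReal_mono (measure_ne_top μ _) (measure_mono fun ω hω => hω.2)
  -- decomposition over instrument values
  have hdecomp : ∀ (A : Ω → ℝ), Measurable A → ∀ (a : ℝ) (s : Set T), MeasurableSet s →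
      pr μ {ω | A ω ≤ a ∧ η ω ∈ s}
        = ∑ ℓ : Fin L, pr μ {ω | A ω ≤ a ∧ η ω ∈ s ∧ Z ω = ℓ} := by
    intro A hA a s hs
    have hset : {ω | A ω ≤ a ∧ η ω ∈ s}
        = ⋃ ℓ : Fin L, {ω | A ω ≤ a ∧ η ω ∈ s ∧ Z ω = ℓ} := by
      ext ω
      constructor
      · rintro ⟨h1, h2⟩; exact Set.mem_iUnion.mpr ⟨Z ω, h1, h2, rfl⟩
      · intro hω
        obtain ⟨ℓ, h1, h2, _⟩ := Set.mem_iUnion.mp hω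
        exact ⟨h1, h2⟩
    have hmeasE : ∀ ℓ : Fin L, MeasurableSet {ω | A ω ≤ a ∧ η ω ∈ s ∧ Z ω = ℓ} := by
      intro ℓ
      exact (hA measurableSet_Iic).inter ((hmη hs).inter (hmZ (MeasurableSet.singleton ℓ)))
    have hdisj : Pairwise (Function.onFun Disjoint
        fun ℓ : Fin L => {ω | A ω ≤ a ∧ η ω ∈ s ∧ Z ω = ℓ}) := by
      intro i j hij
      rw [Function.onFun, Set.disjoint_left]
      rintro ω ⟨_, _, hi⟩ ⟨_, _, hj⟩
      exact hij (hi ▸ hj)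
    rw [hset]
    unfold pr
    rw [measure_iUnion hdisj hmeasE, tsum_fintype,
      ENNReal.toReal_sum (fun ℓ _ => measure_ne_top μ _)]
  -- key trichotomy
  have key : ∀ (A B : Ω → ℝ) (qA qB : ℝ → ℝ) (FA FB : ℝ → T → ℝ),
      Measurable A → Measurable B → Continuous qB → StrictMono qA → StrictMono qB →
      (∀ (y : ℝ) (s : Set T), MeasurableSet s →
        pr μ {ω | qA (A ω) ≤ y ∧ η ω ∈ s} = ∫ t in s, FA y t ∂ν) →
      (∀ (y : ℝ) (s : Set T), MeasurableSet s →
        pr μ {ω | qB (B ω) ≤ y ∧ η ω ∈ s} = ∫ t in s, FB y t ∂ν) →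
      (∀ (u : ℝ) (s : Set T), MeasurableSet s → ∀ ℓ : Fin L,
        pr μ {ω | A ω ≤ u ∧ η ω ∈ s ∧ Z ω = ℓ} = pr μ {ω | B ω ≤ u ∧ η ω ∈ s ∧ Z ω = ℓ}) →
      (∀ y, Measurable (FA y)) → (∀ y, Measurable (FB y)) →
      ∀ y : ℝ, (FB y =ᵐ[ν] fun _ => (0:ℝ)) ∨ (FB y =ᵐ[ν] fun _ => (1:ℝ)) ∨
        ∃ y', FB y =ᵐ[ν] FA y' := by
    intro A B qA qB FA FB hA hB hcB hmA hmB hFA hFB hrs hFAm hFBm y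
    rcases aux_trichotomy hcB hmB y with hcase | hcase | ⟨a, hcase⟩
    · left
      refine aux_ae_eq (hFBm y) measurable_const (hbnd FB _ hFB y) ?_ ?_
      · intro s hs
        rw [integral_const]
        simp
      · intro s hs
        rw [← hFB y s hs]
        have he : {ω | qB (B ω) ≤ y ∧ η ω ∈ s} = (∅ : Set Ω) := by
          ext ω
          simp only [Set.mem_setOf_eq, Set.mem_empty_iff_false, iff_false, not_and]
          exact fun h1 _ => hcase _ h1
        rw [he]
        simp [pr]
    · right; left
      refine aux_ae_eq (hFBm y) measurable_const (hbnd FB _ hFB y) ?_ ?_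
      · intro s hs
        rw [setIntegral_const, smul_eq_mul, mul_one]
        exact ⟨ENNReal.toReal_nonneg, le_refl _⟩
      · intro s hs
        rw [← hFB y s hs, setIntegral_const, smul_eq_mul, mul_one, measureReal_def, hνs s hs]
        congr 1
        ext ω
        simp [hcase (B ω)]
    · right; right
      refine ⟨qA a, aux_ae_eq (hFBm y) (hFAm (qA a)) (hbnd FB _ hFB y) (hbnd FA _ hFA (qA a)) ?_⟩
      intro s hs
      rw [← hFB y s hs, ← hFA (qA a) s hs]
      have e1 : {ω | qB (B ω) ≤ y ∧ η ω ∈ s} = {ω | B ω ≤ a ∧ η ω ∈ s} := by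
        ext ω; simp [hcase (B ω)]
      have e2 : {ω | qA (A ω) ≤ qA a ∧ η ω ∈ s} = {ω | A ω ≤ a ∧ η ω ∈ s} := by
        ext ω; simp [hmA.le_iff_le]
      rw [e1, e2, hdecomp B hB a s hs, hdecomp A hA a s hs]
      exact Finset.sum_congr rfl fun ℓ _ => (hrs a s hs ℓ).symm
  -- one direction from the trichotomy
  have dir : ∀ (FA FB : ℝ → T → ℝ),
      (∀ y : ℝ, (FB y =ᵐ[ν] fun _ => (0:ℝ)) ∨ (FB y =ᵐ[ν] fun _ => (1:ℝ)) ∨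
        ∃ y', FB y =ᵐ[ν] FA y') →
      (∀ y : ℝ, (∫ t, w t * FA y t ∂ν) ≤ ∫ t, wt t * FA y t ∂ν) →
      ∀ y : ℝ, (∫ t, w t * FB y t ∂ν) ≤ ∫ t, wt t * FB y t ∂ν := by
    intro FA FB htri hle y
    rcases htri y with hy | hy | ⟨y', hy⟩
    · have e1 : (fun t => w t * FB y t) =ᵐ[ν] fun _ => (0:ℝ) := by
        filter_upwards [hy] with t ht; simp [ht]
      have e2 : (fun t => wt t * FB y t) =ᵐ[ν] fun _ => (0:ℝ) := by
        filter_upwards [hy] with t ht; simp [ht]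
      rw [integral_congr_ae e1, integral_congr_ae e2]
    · have e1 : (fun t => w t * FB y t) =ᵐ[ν] fun t => w t := by
        filter_upwards [hy] with t ht; simp [ht]
      have e2 : (fun t => wt t * FB y t) =ᵐ[ν] fun t => wt t := by
        filter_upwards [hy] with t ht; simp [ht]
      rw [integral_congr_ae e1, integral_congr_ae e2, hw1, hwt1]
    · have e1 : (fun t => w t * FB y t) =ᵐ[ν] fun t => w t * FA y' t := by
        filter_upwards [hy] with t ht; rw [ht]
      have e2 : (fun t => wt t * FB y t) =ᵐ[ν] fun t => wt t * FA y' t := by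
        filter_upwards [hy] with t ht; rw [ht]
      rw [integral_congr_ae e1, integral_congr_ae e2]
      exact hle y'
  -- conditional CDF identities in terms of U₀, U₁
  have hF0' : ∀ (y : ℝ) (s : Set T), MeasurableSet s →
      pr μ {ω | q 0 (U0 ω) ≤ y ∧ η ω ∈ s} = ∫ t in s, F0 y t ∂ν := by
    intro y s hs
    rw [← hF0 y s hs]
    congr 1
    ext ω
    simp [hY0 ω]
  have hF1' : ∀ (y : ℝ) (s : Set T), MeasurableSet s →
      pr μ {ω | q 1 (U1 ω) ≤ y ∧ η ω ∈ s} = ∫ t in s, F1 y t ∂ν := by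
    intro y s hs
    rw [← hF1 y s hs]
    congr 1
    ext ω
    simp [hY1 ω]
  have tri10 := key U1 U0 (q 1) (q 0) F1 F0 hmU1 hmU0 (hq 0).1 (hq 1).2 (hq 0).2
    hF1' hF0' (fun u s hs ℓ => (hranksim u s hs ℓ).symm) hF1meas hF0meas
  have tri01 := key U0 U1 (q 0) (q 1) F0 F1 hmU0 hmU1 (hq 1).1 (hq 0).2 (hq 1).2
    hF0' hF1' hranksim hF0meas hF1meas
  exact ⟨dir F1 F0 tri10, dir F0 F1 tri01⟩
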